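/- Let d ≥ 1, let b : ℝ^d → ℝ^d and k : ℝ^d → ℝ be continuous with k(x) ≥ 0 for all x, and let U ⊆ ℝ^d be an open, bounded and connected set. Let f be twice continuously differentiable on an open set containing the closure of U. Assume 𝒜f(x) ≥ 0 for every x ∈ U, set M = sup{ f(x) : x ∈ closure of U }, assume M ≥ 0, and assume there exists x₀ ∈ U (an interior point) with f(x₀) = M. Then f(x) = M for every x ∈ U, i.e., f is constant on U. -/

import Mathlib

open MeasureTheory

noncomputable section

/-- Laplacian of `f : ℝ^d → ℝ` at `x`, computed as the trace of the second derivative. -/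
def lap {d : ℕ} (f : EuclideanSpace ℝ (Fin d) → ℝ) (x : EuclideanSpace ℝ (Fin d)) : ℝ :=
  ∑ i, fderiv ℝ (fderiv ℝ f) x (EuclideanSpace.single i 1) (EuclideanSpace.single i 1)

/-- The elliptic generator with killing:
`𝒜 f (x) = (1/2) Δf(x) + ⟨b(x), ∇f(x)⟩ − k(x) f(x)`. -/
def gen {d : ℕ} (b : EuclideanSpace ℝ (Fin d) → EuclideanSpace ℝ (Fin d))
    (k : EuclideanSpace ℝ (Fin d) → ℝ) (f : EuclideanSpace ℝ (Fin d) → ℝ)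
    (x : EuclideanSpace ℝ (Fin d)) : ℝ :=
  (1 / 2) * lap f x + (inner ℝ (b x) (gradient f x) : ℝ) - k x * f x

section Aux

open Real

variable {d : ℕ}
local notation "E" => EuclideanSpace ℝ (Fin d)

lemma hasFDerivAt_Q (p x : E) :
    HasFDerivAt (fun y : E => (inner ℝ (y - p) (y - p) : ℝ)) ((2:ℝ) • innerSL ℝ (x - p)) x := by
  have h1 : HasFDerivAt (fun y : E => y - p) (ContinuousLinearMap.id ℝ E) x :=
    (hasFDerivAt_id x).sub_const p
  have := h1.inner ℝ h1
  refine this.congr_fderiv (Eq.symm ?_)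
  ext v
  simp only [fderivInnerCLM, ContinuousLinearMap.comp_apply, ContinuousLinearMap.prod_apply,
    ContinuousLinearMap.id_apply, ContinuousLinearMap.smul_apply, innerSL_apply_apply,
    isBoundedBilinearMap_inner, IsBoundedBilinearMap.deriv]
  show (2:ℝ) • (inner ℝ (x-p) v : ℝ) = inner ℝ (x-p) v + inner ℝ v (x-p)
  rw [real_inner_comm v]
  rw [smul_eq_mul]; ring

def lap' {d : ℕ} (f : EuclideanSpace ℝ (Fin d) → ℝ) (x : EuclideanSpace ℝ (Fin d)) : ℝ :=
  ∑ i, fderiv ℝ (fderiv ℝ f) x (EuclideanSpace.single i 1) (EuclideanSpace.single i 1)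

def gen' {d : ℕ} (b : EuclideanSpace ℝ (Fin d) → EuclideanSpace ℝ (Fin d))
    (k : EuclideanSpace ℝ (Fin d) → ℝ) (f : EuclideanSpace ℝ (Fin d) → ℝ)
    (x : EuclideanSpace ℝ (Fin d)) : ℝ :=
  (1 / 2) * lap' f x + (inner ℝ (b x) (gradient f x) : ℝ) - k x * f x

def Qf (p : E) (x : E) : ℝ := inner ℝ (x - p) (x - p)
def hfun (p : E) (α r : ℝ) (x : E) : ℝ := exp (-α * Qf p x) - exp (-α * r^2)
def c1 (p : E) (α : ℝ) (x : E) : ℝ := -2*α*exp (-α * Qf p x)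
def inSL : (EuclideanSpace ℝ (Fin d)) →L[ℝ] (EuclideanSpace ℝ (Fin d)) →L[ℝ] ℝ := innerSL ℝ

lemma hasFDerivAt_hfun (p : E) (α r : ℝ) (x : E) :
    HasFDerivAt (hfun p α r) (c1 p α x • innerSL ℝ (x - p)) x := by
  have hs : HasDerivAt (fun s : ℝ => exp (-α * s) - exp (-α * r^2))
      (-α * exp (-α * Qf p x)) (Qf p x) := by
    have := ((Real.hasDerivAt_exp (-α * Qf p x)).comp (Qf p x)
      ((hasDerivAt_id (Qf p x)).const_mul (-α))).sub_const (exp (-α * r^2))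
    refine this.congr_deriv (Eq.symm ?_)
    ring
  have := hs.comp_hasFDerivAt x (hasFDerivAt_Q p x)
  refine this.congr_fderiv (Eq.symm ?_)
  rw [smul_smul]
  congr 1
  unfold c1; ring

lemma hasFDerivAt_c1 (p : E) (α : ℝ) (x : E) :
    HasFDerivAt (c1 p α) ((4*α^2*exp (-α * Qf p x)) • innerSL ℝ (x - p)) x := by
  have hs : HasDerivAt (fun s : ℝ => -2*α*exp (-α * s))
      (2*α^2 * exp (-α * Qf p x)) (Qf p x) := by
    have := ((Real.hasDerivAt_exp (-α * Qf p x)).comp (Qf p x)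
      ((hasDerivAt_id (Qf p x)).const_mul (-α))).const_mul (-2*α)
    refine this.congr_deriv (Eq.symm ?_)
    ring
  have := hs.comp_hasFDerivAt x (hasFDerivAt_Q p x)
  refine this.congr_fderiv (Eq.symm ?_)
  rw [smul_smul]
  congr 1
  ring

lemma hasFDerivAt_G (p : E) (α : ℝ) (x : E) :
    HasFDerivAt (fun y => c1 p α y • innerSL ℝ (y - p))
      (c1 p α x • (inSL : E →L[ℝ] E →L[ℝ] ℝ)
        + ((4*α^2*exp (-α * Qf p x)) • innerSL ℝ (x - p)).smulRight (innerSL ℝ (x - p))) x := by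
  have hΦ : HasFDerivAt (fun y : E => innerSL ℝ (y - p)) (inSL : E →L[ℝ] E →L[ℝ] ℝ) x := by
    have := (inSL : E →L[ℝ] E →L[ℝ] ℝ).hasFDerivAt.comp x ((hasFDerivAt_id x).sub_const p)
    simp only [ContinuousLinearMap.comp_id] at this
    exact this
  exact (hasFDerivAt_c1 p α x).smul hΦ

lemma inner_gradient (u : E → ℝ) (x v : E) :
    (inner ℝ v (gradient u x) : ℝ) = fderiv ℝ u x v := by
  rw [real_inner_comm]
  exact InnerProductSpace.toDual_symm_apply

lemma inSL_apply (v w : E) : (inSL : E →L[ℝ] E →L[ℝ] ℝ) v w = (inner ℝ v w : ℝ) := rfl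

lemma sum_inner_single_sq (y : E) : ∑ i, (inner ℝ y (EuclideanSpace.single i (1:ℝ)) : ℝ)
    * (inner ℝ y (EuclideanSpace.single i (1:ℝ)) : ℝ) = (inner ℝ y y : ℝ) := by
  simp [EuclideanSpace.inner_single_right, PiLp.inner_apply, RCLike.inner_apply, mul_comm]
  rw [EuclideanSpace.norm_eq, Real.sq_sqrt (Finset.sum_nonneg fun i _ => sq_nonneg _)]
  simp [sq]

lemma fderiv_fderiv_hfun (p : E) (α r : ℝ) (x : E) :
    fderiv ℝ (fderiv ℝ (hfun p α r)) x
      = c1 p α x • (inSL : E →L[ℝ] E →L[ℝ] ℝ)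
        + ((4*α^2*exp (-α * Qf p x)) • innerSL ℝ (x - p)).smulRight (innerSL ℝ (x - p)) := by
  rw [show fderiv ℝ (hfun p α r) = fun y => c1 p α y • innerSL ℝ (y - p) from
    funext fun y => (hasFDerivAt_hfun p α r y).fderiv]
  exact (hasFDerivAt_G p α x).fderiv

lemma lap_hfun (p : E) (α r : ℝ) (x : E) :
    lap' (hfun p α r) x = 4*α^2*exp (-α * Qf p x) * Qf p x + c1 p α x * d := by
  have key : ∀ i : Fin d, fderiv ℝ (fderiv ℝ (hfun p α r)) x (EuclideanSpace.single i 1)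
      (EuclideanSpace.single i 1) = c1 p α x
        * (inner ℝ (EuclideanSpace.single i (1:ℝ)) (EuclideanSpace.single i (1:ℝ)) : ℝ)
        + (4*α^2*exp (-α * Qf p x)) * ((inner ℝ (x - p) (EuclideanSpace.single i (1:ℝ)) : ℝ)
          * (inner ℝ (x - p) (EuclideanSpace.single i (1:ℝ)) : ℝ)) := by
    intro i
    rw [fderiv_fderiv_hfun]
    simp [inSL_apply, ContinuousLinearMap.smul_apply, innerSL_apply_apply, inner_sub_left]
    ring
  unfold lap'
  rw [Finset.sum_congr rfl fun i _ => key i]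
  rw [Finset.sum_add_distrib, ← Finset.mul_sum, ← Finset.mul_sum, sum_inner_single_sq]
  have h1 : ∀ i : Fin d, (inner ℝ (EuclideanSpace.single i (1:ℝ)) (EuclideanSpace.single i (1:ℝ)) : ℝ) = 1 := by
    intro i; simp [EuclideanSpace.inner_single_right]
  simp only [h1, Finset.sum_const, Finset.card_univ, Fintype.card_fin, nsmul_eq_mul, mul_one]
  unfold Qf
  ring

lemma second_deriv_nonpos (O : Set E) (hO : IsOpen O) (w : E → ℝ) (hw : ContDiffOn ℝ 2 w O)
    (z : E) (hz : z ∈ O) (hmax : IsLocalMax w z) (e : E) (he : ‖e‖ = 1) :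
    fderiv ℝ (fderiv ℝ w) z e e ≤ 0 := by
  by_contra hpos
  push_neg at hpos
  set D := fderiv ℝ (fderiv ℝ w) z with hD
  -- differentiability of fderiv w at z
  have hwz : ContDiffAt ℝ 2 w z := hw.contDiffAt (hO.mem_nhds hz)
  have hfd : DifferentiableAt ℝ (fderiv ℝ w) z := by
    have h1 : ContDiffAt ℝ 1 (fderiv ℝ w) z := hwz.fderiv_right (by norm_num)
    exact h1.differentiableAt (by norm_num)
  -- ψ t = directional derivative along e at z + t e
  set ψ : ℝ → ℝ := fun t => fderiv ℝ w (z + t • e) e with hψ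
  have hline : ∀ t : ℝ, HasDerivAt (fun s : ℝ => z + s • e) e t := by
    intro t
    have := ((hasDerivAt_id t).smul_const e).const_add z
    simpa using this
  have hψ0 : HasDerivAt ψ (D e e) 0 := by
    have hL : HasFDerivAt (fderiv ℝ w) D z := hfd.hasFDerivAt
    have hz0 : z + (0:ℝ) • e = z := by simp
    have hc : HasDerivAt (fun t : ℝ => fderiv ℝ w (z + t • e)) (D e) 0 := by
      refine HasFDerivAt.comp_hasDerivAt 0 ?_ (hline 0)
      rw [hz0]; exact hL
    have := (ContinuousLinearMap.apply ℝ ℝ e).hasFDerivAt.comp_hasDerivAt 0 hc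
    exact this
  have hψzero : ψ 0 = 0 := by
    simp [hψ, hmax.fderiv_eq_zero]
  -- ψ is eventually positive on the right
  have hslope : Filter.Tendsto (slope ψ 0) (nhdsWithin 0 {(0:ℝ)}ᶜ) (nhds (D e e)) :=
    hasDerivAt_iff_tendsto_slope.mp hψ0
  have hev : ∀ᶠ t in nhdsWithin 0 {(0:ℝ)}ᶜ, 0 < slope ψ 0 t :=
    hslope.eventually (eventually_gt_nhds hpos)
  rw [eventually_nhdsWithin_iff, Metric.eventually_nhds_iff] at hev
  obtain ⟨δ₂, hδ₂, hev⟩ := hev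
  -- ball in O and local max ball
  obtain ⟨δ₀, hδ₀, hball⟩ := Metric.isOpen_iff.mp hO z hz
  obtain ⟨δ₁, hδ₁, hmaxball⟩ := Metric.eventually_nhds_iff_ball.mp hmax
  set τ := min δ₀ (min δ₁ δ₂) with hτ
  have hτpos : 0 < τ := lt_min hδ₀ (lt_min hδ₁ hδ₂)
  set t₁ := τ / 2 with ht₁
  have ht₁pos : 0 < t₁ := by positivity
  have hmem : ∀ t : ℝ, |t| ≤ t₁ → z + t • e ∈ Metric.ball z τ := by
    intro t ht
    rw [Metric.mem_ball, dist_eq_norm]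
    have : ‖z + t • e - z‖ = |t| := by
      simp [norm_smul, he]
    rw [this]
    exact lt_of_le_of_lt ht (by linarith)
  have hψpos : ∀ t : ℝ, 0 < t → t ≤ t₁ → 0 < ψ t := by
    intro t ht0 htle
    have h1 : 0 < slope ψ 0 t := by
      apply hev
      · rw [Real.dist_eq, sub_zero]
        rw [abs_of_pos ht0]
        calc t ≤ t₁ := htle
        _ < τ := by linarith
        _ ≤ δ₂ := le_trans (min_le_right _ _) (min_le_right _ _)
      · simpa using ne_of_gt ht0
    rw [slope_def_field, hψzero, sub_zero, sub_zero] at h1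
    have h2 := mul_pos h1 ht0
    rwa [div_mul_cancel₀ _ (ne_of_gt ht0)] at h2
  -- φ is strictly monotone on [0, t₁]
  set φ : ℝ → ℝ := fun t => w (z + t • e) with hφ
  have hders : ∀ t : ℝ, |t| ≤ t₁ → HasDerivAt φ (ψ t) t := by
    intro t ht
    have hmem' : z + t • e ∈ O := by
      apply hball
      have := hmem t ht
      exact Metric.ball_subset_ball (min_le_left _ _) this
    have hdiff : DifferentiableAt ℝ w (z + t • e) :=
      (hw.differentiableOn (by norm_num)).differentiableAt (hO.mem_nhds hmem')
    exact hdiff.hasFDerivAt.comp_hasDerivAt t (hline t)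
  have hcont : ContinuousOn φ (Set.Icc 0 t₁) := by
    intro t ht
    exact ((hders t (by rw [abs_of_nonneg ht.1]; exact ht.2)).continuousAt).continuousWithinAt
  have hmono : StrictMonoOn φ (Set.Icc 0 t₁) := by
    apply strictMonoOn_of_deriv_pos (convex_Icc 0 t₁) hcont
    intro t ht
    rw [interior_Icc] at ht
    rw [(hders t (by rw [abs_of_pos ht.1]; exact le_of_lt ht.2)).deriv]
    exact hψpos t ht.1 (le_of_lt ht.2)
  have hlt : φ 0 < φ t₁ :=
    hmono (Set.left_mem_Icc.mpr (le_of_lt ht₁pos)) (Set.right_mem_Icc.mpr (le_of_lt ht₁pos)) ht₁pos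
  have hle : φ t₁ ≤ φ 0 := by
    have hm : z + t₁ • e ∈ Metric.ball z δ₁ := by
      have := hmem t₁ (le_of_eq (abs_of_pos ht₁pos))
      exact Metric.ball_subset_ball (le_trans (min_le_right _ _) (min_le_left _ _)) this
    have := hmaxball _ hm
    simpa [hφ] using this
  linarith

lemma lap_nonpos_at_max (O : Set E) (hO : IsOpen O) (w : E → ℝ) (hw : ContDiffOn ℝ 2 w O)
    (z : E) (hz : z ∈ O) (hmax : IsLocalMax w z) : lap' w z ≤ 0 := by
  apply Finset.sum_nonpos
  intro i _
  exact second_deriv_nonpos O hO w hw z hz hmax (EuclideanSpace.single i 1) (by simp)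

lemma gen_nonpos_at_max (b : E → E) (k : E → ℝ) (hk0 : ∀ x, 0 ≤ k x)
    (O : Set E) (hO : IsOpen O) (w : E → ℝ) (hw : ContDiffOn ℝ 2 w O)
    (z : E) (hz : z ∈ O) (hmax : IsLocalMax w z) (hwz : 0 ≤ w z) :
    gen' b k w z ≤ 0 := by
  unfold gen'
  have h1 : (inner ℝ (b z) (gradient w z) : ℝ) = 0 := by
    rw [inner_gradient, hmax.fderiv_eq_zero]
    simp
  have h2 : lap' w z ≤ 0 := lap_nonpos_at_max O hO w hw z hz hmax
  have h3 : 0 ≤ k z * w z := mul_nonneg (hk0 z) hwz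
  rw [h1]
  linarith

lemma gen_w_eq (b : E → E) (k : E → ℝ) (V : Set E) (hV : IsOpen V)
    (f : E → ℝ) (hf : ContDiffOn ℝ 2 f V) (M ε : ℝ) (p : E) (α r : ℝ)
    (z : E) (hz : z ∈ V) :
    gen' b k (fun x => f x - M + ε * hfun p α r x) z
      = gen' b k f z + k z * M + ε * gen' b k (hfun p α r) z := by
  set G : E → (E →L[ℝ] ℝ) := fun x => c1 p α x • innerSL ℝ (x - p) with hG
  set w : E → ℝ := fun x => f x - M + ε * hfun p α r x with hw
  have hdf : ∀ x ∈ V, DifferentiableAt ℝ f x := fun x hx =>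
    (hf.differentiableOn (by norm_num)).differentiableAt (hV.mem_nhds hx)
  -- first derivative of w on V
  have hfw : ∀ x ∈ V, HasFDerivAt w (fderiv ℝ f x + ε • G x) x := by
    intro x hx
    exact ((hdf x hx).hasFDerivAt.sub_const M).add ((hasFDerivAt_hfun p α r x).const_mul ε)
  have hfw' : ∀ x ∈ V, fderiv ℝ w x = fderiv ℝ f x + ε • G x := fun x hx => (hfw x hx).fderiv
  -- the first derivatives of components are differentiable at z
  have hdf2 : DifferentiableAt ℝ (fderiv ℝ f) z := by
    have h1 : ContDiffAt ℝ 1 (fderiv ℝ f) z :=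
      (hf.contDiffAt (hV.mem_nhds hz)).fderiv_right (by norm_num)
    exact h1.differentiableAt (by norm_num)
  have hdG : DifferentiableAt ℝ G z := (hasFDerivAt_G p α z).differentiableAt
  -- second derivative of w at z
  have hsnd : fderiv ℝ (fderiv ℝ w) z = fderiv ℝ (fderiv ℝ f) z + ε • fderiv ℝ G z := by
    have hee : fderiv ℝ w =ᶠ[nhds z] fun x => fderiv ℝ f x + ε • G x := by
      filter_upwards [hV.mem_nhds hz] with x hx using hfw' x hx
    rw [hee.fderiv_eq, fderiv_fun_add hdf2 (hdG.fun_const_smul ε), fderiv_fun_const_smul hdG]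
  have hsndh : fderiv ℝ (fderiv ℝ (hfun p α r)) z = fderiv ℝ G z := by
    rw [show fderiv ℝ (hfun p α r) = G from funext fun y => (hasFDerivAt_hfun p α r y).fderiv]
  -- laplacian
  have hlap : lap' w z = lap' f z + ε * lap' (hfun p α r) z := by
    unfold lap'
    rw [Finset.mul_sum, ← Finset.sum_add_distrib]
    apply Finset.sum_congr rfl
    intro i _
    rw [hsnd, hsndh]
    simp
  -- gradient terms
  have hgrad : ∀ u : E → ℝ, (inner ℝ (b z) (gradient u z) : ℝ) = fderiv ℝ u z (b z) :=
    fun u => inner_gradient u z (b z)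
  unfold gen'
  rw [hlap, hgrad, hgrad, hgrad, hfw' z hz,
    show fderiv ℝ (hfun p α r) z = G z from (hasFDerivAt_hfun p α r z).fderiv]
  simp only [ContinuousLinearMap.add_apply, ContinuousLinearMap.smul_apply, smul_eq_mul, hw]
  unfold hfun
  ring

lemma contDiff_hfun (p : E) (α r : ℝ) : ContDiff ℝ 2 (hfun p α r) := by
  unfold hfun Qf
  apply ContDiff.sub _ contDiff_const
  apply Real.contDiff_exp.comp
  exact contDiff_const.mul (((contDiff_id.sub contDiff_const)).inner ℝ
    ((contDiff_id.sub contDiff_const)))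

lemma gen_hfun_pos (b : E → E) (k : E → ℝ) (hk0 : ∀ x, 0 ≤ k x) (p : E) (r B K : ℝ)
    (hr : 0 < r) (hB : ∀ x ∈ Metric.closedBall p r, ‖b x‖ ≤ B)
    (hK : ∀ x ∈ Metric.closedBall p r, k x ≤ K) (hB0 : 0 ≤ B) (hK0 : 0 ≤ K)
    (α : ℝ) (hα1 : 1 ≤ α) (hα : (d + 2*B*r + K + 1) * (2 / r^2) ≤ α)
    (x : E) (hx : x ∈ Metric.closedBall p r) (hx2 : r/2 ≤ dist x p) :
    0 < gen' b k (hfun p α r) x := by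
  set Q := Qf p x with hQdef
  set e := exp (-α * Q) with hedef
  have he : 0 < e := exp_pos _
  have hnorm : ‖x - p‖ = dist x p := by rw [dist_eq_norm]
  have hQnorm : Q = ‖x - p‖^2 := by
    rw [hQdef]; unfold Qf; rw [real_inner_self_eq_norm_sq]
  have hQ : r^2/4 ≤ Q := by
    rw [hQnorm, hnorm]
    have := pow_le_pow_left₀ (by positivity) hx2 2
    calc r^2/4 = (r/2)^2 := by ring
    _ ≤ (dist x p)^2 := this
  have hQr : Q ≤ r^2 := by
    rw [hQnorm, hnorm]
    exact pow_le_pow_left₀ dist_nonneg (Metric.mem_closedBall.mp hx) 2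
  set I : ℝ := inner ℝ (x - p) (b x) with hIdef
  have hI : |I| ≤ r * B := by
    calc |I| ≤ ‖x - p‖ * ‖b x‖ := abs_real_inner_le_norm _ _
    _ ≤ r * B := by
        apply mul_le_mul _ (hB x hx) (norm_nonneg _) (le_of_lt hr)
        rw [hnorm]; exact Metric.mem_closedBall.mp hx
  -- value of gen
  have hgen : gen' b k (hfun p α r) x
      = (1/2) * (4*α^2*e*Q + (-2*α*e)*d) + (-2*α*e)*I - k x * hfun p α r x := by
    unfold gen'
    rw [lap_hfun, inner_gradient, (hasFDerivAt_hfun p α r x).fderiv]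
    simp only [ContinuousLinearMap.smul_apply, innerSL_apply_apply, smul_eq_mul]
    unfold c1
    rw [← hQdef, ← hedef]
    try rw [← hIdef]
    try ring
    try rfl
  have hh1 : hfun p α r x ≤ e := by
    unfold hfun
    rw [← hQdef, ← hedef]
    have := exp_pos (-α * r^2)
    linarith
  have hkh : k x * hfun p α r x ≤ K * e :=
    le_trans (mul_le_mul_of_nonneg_left hh1 (hk0 x))
      (mul_le_mul_of_nonneg_right (hK x hx) he.le)
  have hIb : (-2*α*e)*I ≥ (-2*α*e)*(r*B) := by
    apply mul_le_mul_of_nonpos_left _ (by nlinarith)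
    exact le_trans (le_abs_self I) hI
  have hkey : α*d + 2*α*(r*B) + K + 1 ≤ 2*α^2*Q := by
    have h1 : d + 2*B*r + K + 1 ≤ α * (r^2/2) := by
      have h2 := mul_le_mul_of_nonneg_right hα (le_of_lt (show (0:ℝ) < r^2/2 by positivity))
      calc (d:ℝ) + 2*B*r + K + 1 = ((d:ℝ) + 2*B*r + K + 1) * (2/r^2) * (r^2/2) := by
            field_simp
      _ ≤ α * (r^2/2) := h2
    have h3 : α * ((d:ℝ) + 2*B*r + K + 1) ≤ α * (α * (r^2/2)) :=
      mul_le_mul_of_nonneg_left h1 (by linarith)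
    have h4 : α * (α * (r^2/2)) ≤ 2*α^2*Q := by nlinarith
    nlinarith
  rw [hgen]
  nlinarith [mul_le_mul_of_nonneg_left hkey he.le, mul_pos he (show (0:ℝ) < 1 by norm_num)]

set_option maxHeartbeats 2000000 in
theorem strong_maximum_principle' {d : ℕ} (hd : 1 ≤ d)
    (b : EuclideanSpace ℝ (Fin d) → EuclideanSpace ℝ (Fin d))
    (k : EuclideanSpace ℝ (Fin d) → ℝ)
    (hb : Continuous b) (hk : Continuous k) (hk0 : ∀ x, 0 ≤ k x)
    (U : Set (EuclideanSpace ℝ (Fin d))) (hU : IsOpen U)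
    (hUbdd : Bornology.IsBounded U) (hUconn : IsConnected U)
    (V : Set (EuclideanSpace ℝ (Fin d))) (hV : IsOpen V) (hUV : closure U ⊆ V)
    (f : EuclideanSpace ℝ (Fin d) → ℝ) (hf : ContDiffOn ℝ 2 f V)
    (hA : ∀ x ∈ U, 0 ≤ gen' b k f x)
    (M : ℝ) (hM : M = sSup (f '' closure U)) (hM0 : 0 ≤ M)
    (x₀ : EuclideanSpace ℝ (Fin d)) (hx₀ : x₀ ∈ U) (hfx₀ : f x₀ = M) :
    ∀ x ∈ U, f x = M := by
  have hUcl : IsCompact (closure U) :=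
    Metric.isCompact_of_isClosed_isBounded isClosed_closure hUbdd.closure
  have hfcV : ContinuousOn f V := hf.continuousOn
  have hfc : ContinuousOn f (closure U) := hfcV.mono hUV
  have hbddA : BddAbove (f '' closure U) := (hUcl.image_of_continuousOn hfc).bddAbove
  have hfleM : ∀ y ∈ closure U, f y ≤ M := fun y hy => hM ▸ le_csSup hbddA ⟨y, hy, rfl⟩
  have hfleM' : ∀ y ∈ U, f y ≤ M := fun y hy => hfleM y (subset_closure hy)
  have hdfV : ∀ x ∈ V, DifferentiableAt ℝ f x := fun x hx =>
    (hf.differentiableOn (by norm_num)).differentiableAt (hV.mem_nhds hx)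
  set S : Set (EuclideanSpace ℝ (Fin d)) := {y | y ∈ U ∧ f y = M} with hSdef
  set D : Set (EuclideanSpace ℝ (Fin d)) := {y | y ∈ U ∧ f y < M} with hDdef
  have hDopen : IsOpen D := by
    have h1 : IsOpen (V ∩ f ⁻¹' (Set.Iio M)) :=
      hfcV.isOpen_inter_preimage hV isOpen_Iio
    have : D = U ∩ (V ∩ f ⁻¹' (Set.Iio M)) := by
      ext y
      constructor
      · rintro ⟨hyU, hyf⟩
        exact ⟨hyU, hUV (subset_closure hyU), hyf⟩
      · rintro ⟨hyU, _, hyf⟩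
        exact ⟨hyU, hyf⟩
    rw [this]
    exact hU.inter h1
  -- The Hopf-lemma core: no point of D is close to a point of S well inside U.
  have key : ∀ q ∈ S, ∀ ρ > 0, Metric.ball q ρ ⊆ U → ∀ p ∈ Metric.ball q (ρ/8), p ∉ D := by
    intro q hq ρ hρ hballU p hpq hpD
    -- the compact set of maximum points near p
    set T : Set (EuclideanSpace ℝ (Fin d)) :=
      Metric.closedBall p (ρ/4) ∩ f ⁻¹' {M} with hTdef
    have hdistpq : dist p q < ρ/8 := Metric.mem_ball.mp hpq
    have hTU : Metric.closedBall p (ρ/4) ⊆ U := by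
      intro z hz
      apply hballU
      rw [Metric.mem_ball]
      calc dist z q ≤ dist z p + dist p q := dist_triangle _ _ _
      _ < ρ/4 + ρ/8 := by
          have := Metric.mem_closedBall.mp hz
          linarith
      _ < ρ := by linarith
    have hTclosed : IsClosed T :=
      ContinuousOn.preimage_isClosed_of_isClosed
        (hfcV.mono (fun z hz => hUV (subset_closure (hTU hz))))
        Metric.isClosed_closedBall isClosed_singleton
    have hTcomp : IsCompact T :=
      Metric.isCompact_of_isClosed_isBounded hTclosed
        (Metric.isBounded_closedBall.subset Set.inter_subset_left)
    have hqT : q ∈ T := by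
      constructor
      · rw [Metric.mem_closedBall, dist_comm]
        linarith
      · exact hq.2
    obtain ⟨y, hyT, hyr⟩ := hTcomp.exists_infDist_eq_dist ⟨q, hqT⟩ p
    set r := Metric.infDist p T with hrdef
    have hrle : r ≤ dist p q := Metric.infDist_le_dist_of_mem hqT
    have hrr : r < ρ/8 := lt_of_le_of_lt hrle hdistpq
    have hfp : f p < M := hpD.2
    have hrpos : 0 < r := by
      rcases lt_or_eq_of_le (Metric.infDist_nonneg (s := T) (x := p)) with h | h
      · exact h
      · exfalso
        have : dist p y = 0 := by rw [← hyr, hrdef, ← h]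
        have hpy : p = y := by rwa [dist_eq_zero] at this
        rw [hpy] at hfp
        exact absurd hyT.2 (by simp [ne_of_lt hfp])
    -- the ball around p of radius r is inside D
    have hcbU : Metric.closedBall p r ⊆ U := by
      intro z hz
      apply hTU
      rw [Metric.mem_closedBall]
      calc dist z p ≤ r := Metric.mem_closedBall.mp hz
      _ ≤ ρ/4 := by linarith
    have hballD : ∀ z ∈ Metric.ball p r, f z < M := by
      intro z hz
      rcases lt_or_ge (f z) M with h | h
      · exact h
      · exfalso
        have hfzM : f z = M :=
          le_antisymm (hfleM' z (hcbU (Metric.ball_subset_closedBall hz))) h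
        have hzT : z ∈ T := by
          refine ⟨?_, by simp [hfzM]⟩
          rw [Metric.mem_closedBall]
          have := Metric.mem_ball.mp hz
          linarith
        have h5 := Metric.infDist_le_dist_of_mem (x := p) hzT
        rw [← hrdef] at h5
        have h6 := Metric.mem_ball.mp hz
        rw [dist_comm] at h5
        linarith
    -- y is a maximum point on the sphere of radius r around p, inside U
    have hyU : y ∈ U := hTU (by
      rw [Metric.mem_closedBall, dist_comm, ← hyr]
      linarith)
    have hfyM : f y = M := by
      have := hyT.2; simpa using this
    have hyV : y ∈ V := hUV (subset_closure hyU)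
    have hlocmax : IsLocalMax f y := by
      apply Filter.eventually_of_mem (hU.mem_nhds hyU)
      intro z hz
      rw [hfyM]
      exact hfleM' z hz
    have hfderiv0 : fderiv ℝ f y = 0 := hlocmax.fderiv_eq_zero
    have hdistpy : dist p y = r := hyr.symm
    -- bounds for b and k on the closed ball
    obtain ⟨B₀, hB₀⟩ := (isCompact_closedBall p r).exists_bound_of_continuousOn
      (hb.continuousOn (s := Metric.closedBall p r))
    obtain ⟨K₀, hK₀⟩ := (isCompact_closedBall p r).exists_bound_of_continuousOn
      (hk.continuousOn (s := Metric.closedBall p r))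
    set B := max B₀ 0 with hBdef
    set K := max K₀ 0 with hKdef
    have hB : ∀ z ∈ Metric.closedBall p r, ‖b z‖ ≤ B :=
      fun z hz => le_trans (hB₀ z hz) (le_max_left _ _)
    have hK : ∀ z ∈ Metric.closedBall p r, k z ≤ K :=
      fun z hz => le_trans (le_trans (le_abs_self _) (hK₀ z hz)) (le_max_left _ _)
    have hB0 : (0:ℝ) ≤ B := le_max_right _ _
    have hK0' : (0:ℝ) ≤ K := le_max_right _ _
    -- choice of α
    set α := max 1 ((d + 2*B*r + K + 1) * (2 / r^2)) with hαdef
    have hα1 : 1 ≤ α := le_max_left _ _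
    have hα : ((d:ℝ) + 2*B*r + K + 1) * (2 / r^2) ≤ α := le_max_right _ _
    have hαpos : 0 < α := lt_of_lt_of_le one_pos hα1
    -- choice of ε
    have hinner_comp : IsCompact (Metric.closedBall p (r/2)) := isCompact_closedBall _ _
    have hinner_sub : Metric.closedBall p (r/2) ⊆ Metric.ball p r :=
      Metric.closedBall_subset_ball (by linarith)
    obtain ⟨m, hm, hmmax⟩ := hinner_comp.exists_isMaxOn
      ⟨p, Metric.mem_closedBall_self (by linarith)⟩
      (hfcV.mono (fun z hz => hUV (subset_closure (hcbU (Metric.ball_subset_closedBall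
        (hinner_sub hz))))))
    have hfmM : f m < M := hballD m (hinner_sub hm)
    set ε := (M - f m)/2 with hεdef
    have hεpos : 0 < ε := by rw [hεdef]; linarith
    -- the comparison function
    set w : EuclideanSpace ℝ (Fin d) → ℝ := fun z => f z - M + ε * hfun p α r z with hwdef
    have hwC2 : ContDiffOn ℝ 2 w V :=
      (hf.sub contDiffOn_const).add (contDiffOn_const.mul (contDiff_hfun p α r).contDiffOn)
    set A : Set (EuclideanSpace ℝ (Fin d)) :=
      Metric.ball p r \ Metric.closedBall p (r/2) with hAdef
    have hAopen : IsOpen A := Metric.isOpen_ball.sdiff Metric.isClosed_closedBall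
    have hclA : closure A ⊆ Metric.closedBall p r :=
      closure_minimal (fun z hz => Metric.ball_subset_closedBall hz.1) Metric.isClosed_closedBall
    have hcbclU : Metric.closedBall p r ⊆ closure U := by
      rw [← closure_ball p (ne_of_gt hrpos)]
      exact closure_mono (fun z hz => hcbU (Metric.ball_subset_closedBall hz))
    have hclAV : closure A ⊆ V := fun z hz => hUV (hcbclU (hclA hz))
    -- w ≤ 0 on the boundary of the annulus
    have hwbdry : ∀ z ∈ closure A, z ∉ A → w z ≤ 0 := by
      intro z hz hzA
      have hzcb : dist z p ≤ r := Metric.mem_closedBall.mp (hclA hz)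
      rw [hAdef, Set.mem_diff] at hzA
      push_neg at hzA
      rcases Classical.em (z ∈ Metric.ball p r) with hzb | hzb
      · -- inner ℝ sphere: z in the closed ball of radius r/2
        have hzin := hzA hzb
        have hfz : f z ≤ f m := hmmax hzin
        have hhle : hfun p α r z ≤ 1 := by
          unfold hfun
          have h1 : exp (-α * Qf p z) ≤ 1 := by
            apply Real.exp_le_one_iff.mpr
            have hQ0 : (0:ℝ) ≤ Qf p z := real_inner_self_nonneg
            nlinarith
          have h2 : (0:ℝ) < exp (-α * r^2) := exp_pos _
          linarith
        have hεh : ε * hfun p α r z ≤ ε := by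
          calc ε * hfun p α r z ≤ ε * 1 := mul_le_mul_of_nonneg_left hhle hεpos.le
          _ = ε := mul_one ε
        rw [hwdef]
        simp only
        have : f z - M ≤ f m - M := by linarith
        rw [hεdef] at hεh ⊢
        linarith
      · -- outer sphere : dist z p = r
        have hzr : dist z p = r := le_antisymm hzcb (not_lt.mp (fun h => hzb (Metric.mem_ball.mpr h)))
        have hfz : f z ≤ M := hfleM z (hcbclU (hclA hz))
        have hhz : hfun p α r z = 0 := by
          unfold hfun Qf
          rw [real_inner_self_eq_norm_sq, ← dist_eq_norm, hzr]
          ring_nf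
        rw [hwdef]
        simp only
        rw [hhz]
        linarith
    -- gen of w is positive on A
    have hAU : A ⊆ U := fun z hz => hcbU (Metric.ball_subset_closedBall hz.1)
    have hgenw : ∀ z ∈ A, 0 < gen' b k w z := by
      intro z hz
      have hzV : z ∈ V := hUV (subset_closure (hAU hz))
      rw [hwdef, gen_w_eq b k V hV f hf M ε p α r z hzV]
      have h1 : 0 ≤ gen' b k f z := hA z (hAU hz)
      have h2 : 0 ≤ k z * M := mul_nonneg (hk0 z) hM0
      have hzd : r/2 ≤ dist z p := by
        have := hz.2
        rw [Metric.mem_closedBall] at this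
        linarith [not_le.mp this]
      have h3 : 0 < gen' b k (hfun p α r) z :=
        gen_hfun_pos b k hk0 p r B K hrpos hB hK hB0 hK0' α hα1 hα z
          (Metric.ball_subset_closedBall hz.1) hzd
      linarith [mul_pos hεpos h3]
    -- value of hfun and w at y
    have hQy : Qf p y = r^2 := by
      unfold Qf
      rw [real_inner_self_eq_norm_sq, ← dist_eq_norm, dist_comm, hdistpy]
    have hhy : hfun p α r y = 0 := by
      unfold hfun; rw [hQy, sub_self]
    have hwy : w y = 0 := by
      rw [hwdef]; simp only; rw [hhy, hfyM]; ring
    -- the derivative of w at y in the direction p - y is positive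
    set d0 : ℝ := ε * (2*α*exp (-α * r^2) * r^2) with hd0def
    have hd0pos : 0 < d0 := by
      have := exp_pos (-α * r^2)
      rw [hd0def]
      positivity
    set φ : ℝ → ℝ := fun t => w (y + t • (p - y)) with hφdef
    have hφ : HasDerivAt φ d0 0 := by
      have hline : HasDerivAt (fun t : ℝ => y + t • (p - y)) (p - y) 0 := by
        have := ((hasDerivAt_id (0:ℝ)).smul_const (p - y)).const_add y
        simpa using this
      have hw' : HasFDerivAt w (fderiv ℝ f y + ε • (c1 p α y • innerSL ℝ (y - p))) y :=
        ((hdfV y hyV).hasFDerivAt.sub_const M).add ((hasFDerivAt_hfun p α r y).const_mul ε)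
      rw [hfderiv0] at hw'
      have hcomp : HasDerivAt φ
          ((0 + ε • (c1 p α y • innerSL ℝ (y - p))) (p - y)) 0 := by
        have h00 : y + (0:ℝ) • (p - y) = y := by simp
        have hw'' : HasFDerivAt w (0 + ε • (c1 p α y • innerSL ℝ (y - p)))
            (y + (0:ℝ) • (p - y)) := by
          rw [h00]; exact hw'
        exact hw''.comp_hasDerivAt 0 hline
      convert hcomp using 1
      simp only [ContinuousLinearMap.add_apply, ContinuousLinearMap.zero_apply,
        ContinuousLinearMap.smul_apply, innerSL_apply_apply, smul_eq_mul, zero_add]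
      have hip : (inner ℝ (y - p) (p - y) : ℝ) = -(r^2) := by
        rw [show p - y = -(y - p) by abel, inner_neg_right, real_inner_self_eq_norm_sq,
          ← dist_eq_norm, dist_comm, hdistpy]
      rw [hip]
      unfold c1
      rw [hQy]
      ring
    -- find a point of A where w is positive
    have hslope2 : Filter.Tendsto (slope φ 0) (nhdsWithin 0 {(0:ℝ)}ᶜ) (nhds d0) :=
      hasDerivAt_iff_tendsto_slope.mp hφ
    have hev2 : ∀ᶠ t in nhdsWithin 0 {(0:ℝ)}ᶜ, 0 < slope φ 0 t :=
      hslope2.eventually (eventually_gt_nhds hd0pos)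
    rw [eventually_nhdsWithin_iff, Metric.eventually_nhds_iff] at hev2
    obtain ⟨δ₂, hδ₂, hev2⟩ := hev2
    set t : ℝ := min (δ₂/2) (1/4) with htdef
    have htpos : 0 < t := lt_min (by linarith) (by norm_num)
    have htle : t ≤ 1/4 := min_le_right _ _
    have hslopet : 0 < slope φ 0 t := by
      apply hev2
      · rw [Real.dist_eq, sub_zero, abs_of_pos htpos]
        calc t ≤ δ₂/2 := min_le_left _ _
        _ < δ₂ := by linarith
      · simpa using ne_of_gt htpos
    have hφt : 0 < φ t := by
      rw [slope_def_field, hφdef] at hslopet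
      simp only at hslopet
      rw [show y + (0:ℝ) • (p - y) = y by simp, hwy, sub_zero, sub_zero] at hslopet
      have := mul_pos hslopet htpos
      rwa [div_mul_cancel₀ _ (ne_of_gt htpos)] at this
    set z : EuclideanSpace ℝ (Fin d) := y + t • (p - y) with hzdef
    have hzA : z ∈ A := by
      have hzp : z - p = (1 - t) • (y - p) := by
        rw [hzdef]
        module
      have hdzp : dist z p = (1 - t) * r := by
        rw [dist_eq_norm, hzp, norm_smul, Real.norm_eq_abs, abs_of_pos (by linarith),
          ← dist_eq_norm, dist_comm, hdistpy]
      constructor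
      · rw [Metric.mem_ball, hdzp]
        nlinarith
      · rw [Metric.mem_closedBall, hdzp]
        push_neg
        nlinarith
    have hwz : 0 < w z := hφt
    -- maximum of w over the closure of A
    have hclAcomp : IsCompact (closure A) :=
      Metric.isCompact_of_isClosed_isBounded isClosed_closure
        (Metric.isBounded_closedBall.subset hclA)
    have hwcont : ContinuousOn w (closure A) := (hwC2.continuousOn).mono hclAV
    obtain ⟨z', hz'cl, hz'max⟩ := hclAcomp.exists_isMaxOn ⟨z, subset_closure hzA⟩ hwcont
    have hz'ge : ∀ u ∈ closure A, w u ≤ w z' := fun u hu => (isMaxOn_iff.mp hz'max) u hu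
    have hwz' : 0 < w z' := lt_of_lt_of_le hwz (hz'ge z (subset_closure hzA))
    have hz'A : z' ∈ A := by
      by_contra hc
      have := hwbdry z' hz'cl hc
      linarith
    have hlocmax' : IsLocalMax w z' := by
      apply Filter.eventually_of_mem (hAopen.mem_nhds hz'A)
      intro u hu
      exact hz'ge u (subset_closure hu)
    have hgenle : gen' b k w z' ≤ 0 :=
      gen_nonpos_at_max b k hk0 V hV w hwC2 z' (hUV (subset_closure (hAU hz'A)))
        hlocmax' (le_of_lt hwz')
    exact absurd (hgenw z' hz'A) (not_lt.mpr hgenle)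
  -- S is open
  have hSopen : IsOpen S := by
    rw [Metric.isOpen_iff]
    intro q hq
    obtain ⟨ρ, hρ, hball⟩ := Metric.isOpen_iff.mp hU q hq.1
    refine ⟨ρ/8, by linarith, ?_⟩
    intro p hp
    have hpU : p ∈ U := hball (by
      rw [Metric.mem_ball] at hp ⊢
      linarith)
    rcases eq_or_lt_of_le (hfleM' p hpU) with h | h
    · exact ⟨hpU, h⟩
    · exact absurd ⟨hpU, h⟩ (key q hq ρ hρ hball p hp)
  -- conclude by connectedness
  intro x hx
  by_contra hne
  have hxD : x ∈ D := ⟨hx, lt_of_le_of_ne (hfleM' x hx) hne⟩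
  have hcover : U ⊆ S ∪ D := by
    intro y hy
    rcases eq_or_lt_of_le (hfleM' y hy) with h | h
    · exact Or.inl ⟨hy, h⟩
    · exact Or.inr ⟨hy, h⟩
  obtain ⟨zz, -, hzzS, hzzD⟩ := hUconn.isPreconnected S D hSopen hDopen hcover
    ⟨x₀, hx₀, hx₀, hfx₀⟩ ⟨x, hx, hxD⟩
  exact absurd hzzS.2 (ne_of_lt hzzD.2)

end Aux

/-- **Strong (Hopf-type) maximum principle** for the generator of a diffusion with killing:
if `𝒜 f ≥ 0` on an open, bounded, connected set `U`, `M` is the supremum of `f` over the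
closure of `U`, `M ≥ 0`, and `f` attains `M` at an interior point `x₀ ∈ U`,
then `f ≡ M` on `U`. -/
theorem strong_maximum_principle {d : ℕ} (hd : 1 ≤ d)
    (b : EuclideanSpace ℝ (Fin d) → EuclideanSpace ℝ (Fin d))
    (k : EuclideanSpace ℝ (Fin d) → ℝ)
    (hb : Continuous b) (hk : Continuous k) (hk0 : ∀ x, 0 ≤ k x)
    (U : Set (EuclideanSpace ℝ (Fin d))) (hU : IsOpen U)
    (hUbdd : Bornology.IsBounded U) (hUconn : IsConnected U)
    (V : Set (EuclideanSpace ℝ (Fin d))) (hV : IsOpen V) (hUV : closure U ⊆ V)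
    (f : EuclideanSpace ℝ (Fin d) → ℝ) (hf : ContDiffOn ℝ 2 f V)
    (hA : ∀ x ∈ U, 0 ≤ gen b k f x)
    (M : ℝ) (hM : M = sSup (f '' closure U)) (hM0 : 0 ≤ M)
    (x₀ : EuclideanSpace ℝ (Fin d)) (hx₀ : x₀ ∈ U) (hfx₀ : f x₀ = M) :
    ∀ x ∈ U, f x = M := by
  exact strong_maximum_principle' hd b k hb hk hk0 U hU hUbdd hUconn V hV hUV f hf
    (fun x hx => hA x hx) M hM hM0 x₀ hx₀ hfx₀
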